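/- arXiv:1803.11448 — 9 statements merged into one kernel-verified Lean document; each statement's English description precedes it below -/
import Mathlib

section
/- Let X be a nonempty set and A a nonempty parameter set. For a soft set F : A → Set X in S(X̃) (meaning either F α = ∅ for all α, or F α ≠ ∅ for all α), the elementary complement of F equals the relative complement of F; that is, the soft set whose value at each α ∈ A is the set of values x(α) of all soft elements x : A → X satisfying x(β) ∉ F(β) for all β ∈ A, equals the soft set α ↦ X \ F(α), provided X \ F(α) ≠ ∅ for all α ∈ A (or F(α) = X for all α). -/
namespace SoftE

/-- A soft set over `X` with parameter set `A`. -/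
abbrev SoftSet (X A : Type*) := A → Set X

variable {X A : Type*}

/-- A soft element `x : A → X` belongs to a soft set `F`. -/
def smem (x : A → X) (F : SoftSet X A) : Prop := ∀ α, x α ∈ F α

/-- The soft set generated by a collection of soft elements. -/
def SS (B : Set (A → X)) : SoftSet X A := fun α => {a | ∃ x ∈ B, x α = a}

/-- The null soft set. -/
def nullSoft (X A : Type*) : SoftSet X A := fun _ => ∅

/-- The absolute soft set. -/
def absSoft (X A : Type*) : SoftSet X A := fun _ => Set.univ

/-- Membership in `S(X̃)`: empty at every parameter, or nonempty at every parameter. -/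
def InS (F : SoftSet X A) : Prop := (∀ α, F α = ∅) ∨ (∀ α, F α ≠ ∅)

/-- Soft subset: pointwise inclusion. -/
def softSubset (F G : SoftSet X A) : Prop := ∀ α, F α ⊆ G α

/-- Elementary union of a set of soft sets. -/
def eUnionSet (s : Set (SoftSet X A)) : SoftSet X A := SS {x | ∃ F ∈ s, smem x F}

/-- Elementary union of an indexed family of soft sets. -/
def eUnionFam {ι : Type*} (F : ι → SoftSet X A) : SoftSet X A := SS {x | ∃ i, smem x (F i)}

/-- Binary elementary union. -/
def eUnion2 (F G : SoftSet X A) : SoftSet X A := SS {x | smem x F ∨ smem x G}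

/-- Binary elementary intersection. -/
def eInter2 (F G : SoftSet X A) : SoftSet X A := SS {x | smem x F ∧ smem x G}

/-- Elementary intersection of an indexed family of soft sets. -/
def eInterFam {ι : Type*} (F : ι → SoftSet X A) : SoftSet X A := SS {x | ∀ i, smem x (F i)}

/-- Elementary complement of a soft set. -/
def eCompl (F : SoftSet X A) : SoftSet X A := SS {x | ∀ α, x α ∉ F α}

/-- Relative (pointwise) complement of a soft set. -/
def relCompl (F : SoftSet X A) : SoftSet X A := fun α => (F α)ᶜ

/-- Relative complement inside a subset `Y ⊆ X`. -/
def relComplIn (Y : Set X) (F : SoftSet X A) : SoftSet X A := fun α => Y \ F α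

/-- Elementary complement relative to `Y ⊆ X`. -/
def eComplIn (Y : Set X) (F : SoftSet X A) : SoftSet X A :=
  SS {x | ∀ α, x α ∈ Y \ F α}

/-- A soft e-topology on the soft set `B`. -/
def IsETopologyOn (B : SoftSet X A) (τ : Set (SoftSet X A)) : Prop :=
  (∀ F ∈ τ, InS F ∧ softSubset F B) ∧
  nullSoft X A ∈ τ ∧ B ∈ τ ∧
  (∀ s ⊆ τ, eUnionSet s ∈ τ) ∧
  (∀ F ∈ τ, ∀ G ∈ τ, eInter2 F G ∈ τ)

/-- A soft e-topology on the absolute soft set `(X̃, A)`. -/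
def IsETopology (τ : Set (SoftSet X A)) : Prop := IsETopologyOn (absSoft X A) τ

/-- Soft e-closed set. -/
def IsEClosed (τ : Set (SoftSet X A)) (F : SoftSet X A) : Prop :=
  InS F ∧ InS (relCompl F) ∧ eCompl F ∈ τ

/-- Soft e-Hausdorff property relative to a base soft set `B`. -/
def IsEHausdorffOn (B : SoftSet X A) (τ : Set (SoftSet X A)) : Prop :=
  ∀ x y : A → X, smem x B → smem y B → (∀ α, x α ≠ y α) →
    ∃ F ∈ τ, ∃ G ∈ τ, smem x F ∧ smem y G ∧ ∀ α, F α ∩ G α = ∅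

/-- Soft e-Hausdorff space. -/
def IsEHausdorff (τ : Set (SoftSet X A)) : Prop := IsEHausdorffOn (absSoft X A) τ

/-- Soft e-quasi-compactness relative to a base soft set `B`. -/
def IsEQuasiCompactOn (B : SoftSet X A) (τ : Set (SoftSet X A)) : Prop :=
  ∀ s ⊆ τ, eUnionSet s = B → ∃ t ⊆ s, t.Finite ∧ eUnionSet t = B

/-- Soft e-quasi-compact space. -/
def IsEQuasiCompact (τ : Set (SoftSet X A)) : Prop :=
  IsEQuasiCompactOn (absSoft X A) τ

/-- Soft e-compact set. -/
def IsECompactSet (τ : Set (SoftSet X A)) (K : SoftSet X A) : Prop :=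
  InS K ∧ InS (relCompl K) ∧
  ∀ s ⊆ τ, softSubset K (eUnionSet s) →
    ∃ t ⊆ s, t.Finite ∧ softSubset K (eUnionSet t)

/-- The subspace soft e-topology `τ_Y`. -/
def subTop (τ : Set (SoftSet X A)) (Y : Set X) : Set (SoftSet X A) :=
  {G | ∃ O ∈ τ, G = fun α => O α ∩ Y}

/-- Soft neighborhood of a soft element. -/
def IsNbd (τ : Set (SoftSet X A)) (x : A → X) (N : SoftSet X A) : Prop :=
  N ≠ nullSoft X A ∧ ∃ G ∈ τ, smem x G ∧ softSubset G N

/-- Soft interior of a soft set. -/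
def sInt (τ : Set (SoftSet X A)) (F : SoftSet X A) : SoftSet X A :=
  SS {x | smem x F ∧ ∃ G ∈ τ, smem x G ∧ softSubset G F}

end SoftE

open SoftE


/-- for `F ∈ S(X̃)`, the elementary complement of `F` equals the
relative complement of `F`, provided `X \ F α ≠ ∅` for all `α` or `F α = X` for all `α`. -/
theorem stmt0 {X A : Type*} [Nonempty X] [Nonempty A]
    (F : SoftSet X A) (hF : InS F)
    (h : (∀ α, (F α)ᶜ ≠ (∅ : Set X)) ∨ (∀ α, F α = Set.univ)) :
    eCompl F = relCompl F := by
  rcases h with h | h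
  · funext α
    ext a
    constructor
    · rintro ⟨x, hx, rfl⟩
      exact hx α
    · intro ha
      have hne : ∀ β, ((F β)ᶜ : Set X).Nonempty := fun β =>
        Set.nonempty_iff_ne_empty.2 (h β)
      choose g hg using hne
      classical
      refine ⟨fun β => if β = α then a else g β, fun β => ?_, by simp⟩
      by_cases hβ : β = α
      · subst hβ; simpa [relCompl] using ha
      · simpa [hβ] using hg β
  · funext α
    ext a
    simp only [eCompl, relCompl, SS, Set.mem_setOf_eq, h]
    constructor
    · rintro ⟨x, hx, rfl⟩
      exact absurd (Set.mem_univ (x α)) (by simpa [h] using hx α)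
    · intro ha
      exact absurd (Set.mem_univ a) (by simpa using ha)
end

section
/- Let τ be a soft e-topology on (X̃, A) such that for all O₁, O₂ ∈ τ the pointwise intersection α ↦ O₁(α) ∩ O₂(α) lies in S(X̃) (i.e. is nonempty at every parameter or empty at every parameter). Let Y ⊆ X be nonempty such that for every O ∈ τ the pointwise intersection α ↦ O(α) ∩ Y lies in S(X̃). Then the collection τ_Y = {soft set whose value at α is O(α) ∩ Y | O ∈ τ} is a soft e-topology on (Ỹ, A). -/
open SoftE


open Classical in
/-- Any point of an `InS` soft set extends to a soft element through it. -/
lemma soft_el {X A : Type*} {F : SoftSet X A} (hF : InS F) {α : A} {a : X}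
    (ha : a ∈ F α) : ∃ x : A → X, smem x F ∧ x α = a := by
  rcases hF with h | h
  · exact absurd ha (by simp [h α])
  · have hne : ∀ β, (F β).Nonempty := fun β => Set.nonempty_iff_ne_empty.2 (h β)
    refine ⟨fun β => if hβ : β = α then a else (hne β).some, ?_, by simp⟩
    intro β
    by_cases hβ : β = α
    · subst hβ; simpa using ha
    · simpa [hβ] using (hne β).some_mem

/-- the subspace collection `τ_Y` is a soft e-topology on `(Ỹ, A)`. -/
theorem stmt1 {X A : Type*} [Nonempty A]
    (τ : Set (SoftSet X A)) (hτ : IsETopology τ)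
    (hint : ∀ O₁ ∈ τ, ∀ O₂ ∈ τ, InS (fun α => O₁ α ∩ O₂ α))
    (Y : Set X) (hY : Y.Nonempty)
    (hYint : ∀ O ∈ τ, InS (fun α => O α ∩ Y)) :
    IsETopologyOn (fun _ => Y) (subTop τ Y) := by
  obtain ⟨hmem, hnull, habs, hUn, hIn⟩ := hτ
  refine ⟨?_, ?_, ?_, ?_, ?_⟩
  · rintro G ⟨O, hO, rfl⟩
    exact ⟨hYint O hO, fun α => Set.inter_subset_right⟩
  · exact ⟨nullSoft X A, hnull, by funext α; simp [nullSoft]⟩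
  · exact ⟨absSoft X A, habs, by funext α; simp [absSoft]⟩
  · intro s hs
    refine ⟨eUnionSet {O ∈ τ | (fun α => O α ∩ Y) ∈ s},
      hUn _ (fun O hO => hO.1), ?_⟩
    funext α
    ext a
    constructor
    · rintro ⟨x, ⟨G, hGs, hxG⟩, rfl⟩
      obtain ⟨O, hO, rfl⟩ := hs hGs
      exact ⟨⟨x, ⟨O, ⟨hO, hGs⟩, fun β => (hxG β).1⟩, rfl⟩, (hxG α).2⟩
    · rintro ⟨⟨x, ⟨O, ⟨hOτ, hOs⟩, hxO⟩, rfl⟩, hxY⟩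
      obtain ⟨y, hy, hyα⟩ :=
        soft_el (hYint O hOτ) (show x α ∈ O α ∩ Y from ⟨hxO α, hxY⟩)
      exact ⟨y, ⟨_, hOs, hy⟩, hyα⟩
  · rintro G₁ ⟨O₁, hO₁, rfl⟩ G₂ ⟨O₂, hO₂, rfl⟩
    refine ⟨eInter2 O₁ O₂, hIn O₁ hO₁ O₂ hO₂, ?_⟩
    funext α
    ext a
    constructor
    · rintro ⟨x, ⟨hx1, hx2⟩, rfl⟩
      exact ⟨⟨x, ⟨fun β => (hx1 β).1, fun β => (hx2 β).1⟩, rfl⟩, (hx1 α).2⟩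
    · rintro ⟨ha, haY⟩
      obtain ⟨y, hy, hyα⟩ :=
        soft_el (hYint _ (hIn O₁ hO₁ O₂ hO₂))
          (show a ∈ eInter2 O₁ O₂ α ∩ Y from ⟨ha, haY⟩)
      have hy1 : smem y fun α => O₁ α ∩ Y := by
        intro β
        obtain ⟨⟨z, ⟨hz1, _⟩, hz⟩, hyY⟩ := hy β
        exact ⟨hz ▸ hz1 β, hyY⟩
      have hy2 : smem y fun α => O₂ α ∩ Y := by
        intro β
        obtain ⟨⟨z, ⟨_, hz2⟩, hz⟩, hyY⟩ := hy β
        exact ⟨hz ▸ hz2 β, hyY⟩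
      exact ⟨y, ⟨hy1, hy2⟩, hyα⟩
end

section
/- Under the hypotheses of the subspace construction (τ a soft e-topology on (X̃,A) with pointwise intersections of members of τ in S(X̃), Y ⊆ X nonempty with O ∩̃ Ỹ ∈ S(X̃) for all O ∈ τ), if a soft set Z ∈ S(Ỹ) is soft e_Y-closed in (Ỹ, τ_Y, A) (i.e. its Y-relative complement α ↦ Y \ Z(α) lies in S(Ỹ) and its Y-elementary complement lies in τ_Y), then there exists a soft e-closed set F in (X̃, τ, A) such that Z equals the elementary intersection of F with Ỹ. -/
open SoftE



/-- Saturation: a soft set with all levels nonempty is generated by its soft elements. -/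
lemma sat_aux {X A : Type*} (Z : SoftSet X A) (h : ∀ α, (Z α).Nonempty) :
    SS {x | smem x Z} = Z := by
  classical
  funext α; ext a
  constructor
  · rintro ⟨x, hx, rfl⟩; exact hx α
  · intro ha
    refine ⟨Function.update (fun β => (h β).choose) α a, fun β => ?_, by simp⟩
    by_cases hb : β = α
    · subst hb; simpa using ha
    · simpa [Function.update_of_ne hb] using (h β).choose_spec

/-- a soft `e_Y`-closed set in the subspace is the elementary
intersection of a soft e-closed set of the ambient space with `Ỹ`. -/
theorem stmt2 {X A : Type*} [Nonempty A]
    (τ : Set (SoftSet X A)) (hτ : IsETopology τ)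
    (hint : ∀ O₁ ∈ τ, ∀ O₂ ∈ τ, InS (fun α => O₁ α ∩ O₂ α))
    (Y : Set X) (hY : Y.Nonempty)
    (hYint : ∀ O ∈ τ, InS (fun α => O α ∩ Y))
    (Z : SoftSet X A) (hZS : InS Z) (hZY : softSubset Z (fun _ => Y))
    (hZrc : InS (relComplIn Y Z)) (hZec : eComplIn Y Z ∈ subTop τ Y) :
    ∃ F : SoftSet X A, IsEClosed τ F ∧ Z = eInter2 F (fun _ => Y) := by
  classical
  obtain ⟨y0, hy0⟩ := hY
  have hXne : Nonempty X := ⟨y0⟩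
  obtain ⟨hmem, hnull, habs, hunion, hinter⟩ := hτ
  rcases hZS with hZ0 | hZ1
  · -- Z is the null soft set
    refine ⟨nullSoft X A, ⟨Or.inl fun α => rfl, Or.inr fun α => ?_, ?_⟩, ?_⟩
    · simp [relCompl, nullSoft]
    · have : eCompl (nullSoft X A) = absSoft X A := by
        funext α; ext a
        simp only [eCompl, SS, nullSoft, absSoft, Set.mem_setOf_eq, Set.mem_univ, iff_true]
        exact ⟨fun _ => a, fun _ => by simp, rfl⟩
      rw [this]; exact habs
    · funext α; ext a
      simp only [eInter2, SS, Set.mem_setOf_eq, hZ0 α, Set.mem_empty_iff_false, false_iff]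
      rintro ⟨x, ⟨hx, -⟩, rfl⟩
      exact Set.notMem_empty _ (hx (Classical.arbitrary A))
  · rcases hZrc with hrc0 | hrc1
    · -- Z α = Y for all α
      have hZeq : ∀ α, Z α = Y := by
        intro α
        refine Set.Subset.antisymm (hZY α) fun a ha => ?_
        by_contra h'
        exact (Set.notMem_empty a) (by rw [← hrc0 α]; exact ⟨ha, h'⟩)
      refine ⟨absSoft X A, ⟨Or.inr fun α => by simp [absSoft, Set.univ_eq_empty_iff, hXne],
        Or.inl fun α => by simp [relCompl, absSoft], ?_⟩, ?_⟩
      · have : eCompl (absSoft X A) = nullSoft X A := by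
          funext α; ext a
          simp only [eCompl, SS, absSoft, nullSoft, Set.mem_setOf_eq,
            Set.mem_empty_iff_false, iff_false]
          rintro ⟨x, hx, rfl⟩
          exact hx (Classical.arbitrary A) (Set.mem_univ _)
        rw [this]; exact hnull
      · funext α; ext a
        rw [hZeq α]
        constructor
        · intro ha
          exact ⟨fun _ => a, ⟨fun _ => Set.mem_univ _, fun _ => ha⟩, rfl⟩
        · rintro ⟨x, ⟨-, hx⟩, rfl⟩; exact hx α
    · -- main case
      obtain ⟨O, hO, hOG⟩ := hZec
      have hZne : ∀ α, (Z α).Nonempty := fun α => Set.nonempty_iff_ne_empty.2 (hZ1 α)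
      have hsat : eComplIn Y Z = relComplIn Y Z :=
        sat_aux (relComplIn Y Z) fun α => Set.nonempty_iff_ne_empty.2 (hrc1 α)
      have hkey : ∀ α, O α ∩ Y = Y \ Z α := fun α => by
        have := congrFun (hOG.symm.trans hsat) α
        simpa [relComplIn] using this
      have hFY : ∀ α, (relCompl O) α ∩ Y = Z α := by
        intro α; ext a
        constructor
        · rintro ⟨hnO, haY⟩
          by_contra h'
          have h2 : a ∈ O α ∩ Y := by rw [hkey α]; exact ⟨haY, h'⟩
          exact hnO h2.1
        · intro ha
          refine ⟨fun haO => ?_, hZY α ha⟩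
          have h2 : a ∈ Y \ Z α := by rw [← hkey α]; exact ⟨haO, hZY α ha⟩
          exact h2.2 ha
      refine ⟨relCompl O, ⟨Or.inr fun α => ?_, ?_, ?_⟩, ?_⟩
      · intro hF
        obtain ⟨a, ha⟩ := hZne α
        have : a ∈ (relCompl O) α := ((hFY α).symm ▸ ha).1
        simp [hF] at this
      · have : relCompl (relCompl O) = O := funext fun α => compl_compl _
        rw [this]; exact (hmem O hO).1
      · have : eCompl (relCompl O) = eUnionSet {O} := by
          unfold eCompl eUnionSet
          congr 1
          ext x
          simp [relCompl, smem]
        rw [this]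
        exact hunion {O} (by simpa using hO)
      · have h1 : {x : A → X | smem x (relCompl O) ∧ smem x (fun _ => Y)} = {x | smem x Z} := by
          ext x
          simp only [Set.mem_setOf_eq, smem]
          constructor
          · rintro ⟨h1, h2⟩ α
            exact (hFY α) ▸ ⟨h1 α, h2 α⟩
          · intro h
            constructor
            · intro α; exact (((hFY α).symm ▸ h α) : _).1
            · intro α; exact hZY α (h α)
        have : eInter2 (relCompl O) (fun _ => Y) = SS {x | smem x Z} := by
          unfold eInter2; rw [h1]
        rw [this, sat_aux Z hZne]
end

section
/- Let (X̃, τ, A) be a soft e-Hausdorff space such that the pointwise intersection of any two members of τ lies in S(X̃). If F is a soft e-compact set, then F is a soft e-closed set. -/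
open SoftE


/-- in a soft e-Hausdorff space with pointwise intersections of
open sets in `S(X̃)`, every soft e-compact set is soft e-closed. -/
theorem stmt8 {X A : Type*}
    (τ : Set (SoftSet X A)) (hτ : IsETopology τ) (hH : IsEHausdorff τ)
    (hint : ∀ O₁ ∈ τ, ∀ O₂ ∈ τ, InS (fun α => O₁ α ∩ O₂ α))
    (F : SoftSet X A) (hF : IsECompactSet τ F) :
    IsEClosed τ F := by
  classical
  obtain ⟨hInS, hInSc, hcpt⟩ := hF
  obtain ⟨hmem, hnull, habs, hUnion, hInter⟩ := hτ
  refine ⟨hInS, hInSc, ?_⟩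
  -- key claim: every soft element avoiding F has an open nbhd pointwise-disjoint from F
  have claim : ∀ y : A → X, (∀ α, y α ∉ F α) →
      ∃ W ∈ τ, smem y W ∧ ∀ α, W α ∩ F α = ∅ := by
    intro y hy
    rcases hInS with hemp | hne
    · refine ⟨absSoft X A, habs, fun α => trivial, fun α => ?_⟩
      simp [hemp α]
    · set s : Set (SoftSet X A) :=
        {G | G ∈ τ ∧ ∃ V ∈ τ, smem y V ∧ ∀ α, G α ∩ V α = ∅} with hs
      have hsub : s ⊆ τ := fun G hG => hG.1
      have hch : ∀ β, ∃ b, b ∈ F β := fun β =>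
        Set.nonempty_iff_ne_empty.2 (hne β)
      choose g hg using hch
      have hcov : softSubset F (eUnionSet s) := by
        intro α a ha
        set z : A → X := Function.update g α a with hz
        have hzF : smem z F := by
          intro β
          by_cases hβ : β = α
          · subst hβ; simpa [hz] using ha
          · simpa [hz, Function.update_of_ne hβ] using hg β
        have hne' : ∀ β, z β ≠ y β := by
          intro β h
          exact hy β (h ▸ hzF β)
        obtain ⟨U, hUτ, V, hVτ, hzU, hyV, hdisj⟩ :=
          hH z y (fun β => trivial) (fun β => trivial) hne'
        refine ⟨z, ⟨U, ⟨hUτ, V, hVτ, hyV, fun β => hdisj β⟩, hzU⟩, ?_⟩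
        simp [hz]
      obtain ⟨t, hts, htf, htcov⟩ := hcpt s hsub hcov
      have key : ∀ u : Set (SoftSet X A), u.Finite → u ⊆ s →
          ∃ W ∈ τ, smem y W ∧ ∀ G ∈ u, ∀ α, W α ∩ G α = ∅ := by
        intro u huf
        refine Set.Finite.induction_on
          (motive := fun u _ => u ⊆ s →
            ∃ W ∈ τ, smem y W ∧ ∀ G ∈ u, ∀ α, W α ∩ G α = ∅) u huf ?_ ?_
        · intro _
          exact ⟨absSoft X A, habs, fun α => trivial, by simp⟩
        · intro G u' hGu' hu'f ih hins
          obtain ⟨hGτ, V, hVτ, hyV, hdisj⟩ := hins (Set.mem_insert G u')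
          obtain ⟨W, hWτ, hyW, hWdis⟩ :=
            ih (fun G' hG' => hins (Set.mem_insert_of_mem _ hG'))
          refine ⟨eInter2 V W, hInter V hVτ W hWτ, ?_, ?_⟩
          · intro α; exact ⟨y, ⟨hyV, hyW⟩, rfl⟩
          · have hsubVW : ∀ α, (eInter2 V W) α ⊆ V α ∩ W α := by
              rintro α a ⟨x, ⟨hxV, hxW⟩, rfl⟩
              exact ⟨hxV α, hxW α⟩
            rintro G' (rfl | hG') α
            · apply Set.eq_empty_iff_forall_notMem.2
              rintro a ⟨haVW, haG⟩
              have : a ∈ G' α ∩ V α := ⟨haG, (hsubVW α haVW).1⟩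
              rw [hdisj α] at this
              exact this
            · apply Set.eq_empty_iff_forall_notMem.2
              rintro a ⟨haVW, haG⟩
              have : a ∈ W α ∩ G' α := ⟨(hsubVW α haVW).2, haG⟩
              rw [hWdis G' hG' α] at this
              exact this
      obtain ⟨W, hWτ, hyW, hWdis⟩ := key t htf hts
      refine ⟨W, hWτ, hyW, fun α => ?_⟩
      apply Set.eq_empty_iff_forall_notMem.2
      rintro a ⟨haW, haF⟩
      obtain ⟨x, ⟨G, hGt, hxG⟩, rfl⟩ := htcov α haF
      have : x α ∈ W α ∩ G α := ⟨haW, hxG α⟩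
      rw [hWdis G hGt α] at this
      exact this
  set T : Set (SoftSet X A) := {W | W ∈ τ ∧ ∀ α, W α ∩ F α = ∅} with hT
  have hTτ : T ⊆ τ := fun W hW => hW.1
  have heq : eCompl F = eUnionSet T := by
    funext α
    ext a
    constructor
    · rintro ⟨y, hy, rfl⟩
      obtain ⟨W, hWτ, hyW, hWdis⟩ := claim y hy
      exact ⟨y, ⟨W, ⟨hWτ, hWdis⟩, hyW⟩, rfl⟩
    · rintro ⟨x, ⟨W, ⟨hWτ, hWdis⟩, hxW⟩, rfl⟩
      refine ⟨x, fun β hβ => ?_, rfl⟩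
      have : x β ∈ W β ∩ F β := ⟨hxW β, hβ⟩
      rw [hWdis β] at this
      exact this
  rw [heq]
  exact hUnion T hTτ
end

section
/- Let (X̃, τ, A) be a soft e-compact soft e-Hausdorff space such that pointwise intersections of members of τ lie in S(X̃). Then the elementary intersection of any family of soft e-compact sets, if it is not the null soft set, is a soft e-compact set. -/
open SoftE

section Aux

variable {X A : Type*}

lemma smem_SS {B : Set (A → X)} {x : A → X} (hx : x ∈ B) : smem x (SS B) :=
  fun α => ⟨x, hx, rfl⟩

lemma exists_smem_of_mem {C : SoftSet X A} (hC : ∀ β, (C β).Nonempty) {α : A} {a : X}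
    (ha : a ∈ C α) : ∃ x, smem x C ∧ x α = a := by
  classical
  choose c hc using hC
  refine ⟨Function.update c α a, ?_, Function.update_self _ _ _⟩
  intro β
  by_cases hβ : β = α
  · subst hβ; simpa using ha
  · simpa [Function.update_of_ne hβ] using hc β

lemma eUnionSet_mono {s s' : Set (SoftSet X A)} (h : s ⊆ s') :
    softSubset (eUnionSet s) (eUnionSet s') := by
  rintro α a ⟨x, ⟨F, hF, hxF⟩, rfl⟩
  exact ⟨x, ⟨F, h hF, hxF⟩, rfl⟩

lemma finite_inter {τ : Set (SoftSet X A)} (hτ : IsETopology τ)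
    {t : Set (SoftSet X A)} (hfin : t.Finite) :
    t ⊆ τ → ∃ G ∈ τ, (∀ x : A → X, (∀ F ∈ t, smem x F) → smem x G) ∧
      (∀ α, ∀ F ∈ t, G α ⊆ F α) := by
  refine Set.Finite.induction_on (motive := fun t _ => t ⊆ τ → ∃ G ∈ τ,
    (∀ x : A → X, (∀ F ∈ t, smem x F) → smem x G) ∧ (∀ α, ∀ F ∈ t, G α ⊆ F α)) t hfin ?_ ?_
  · intro _
    exact ⟨absSoft X A, hτ.2.2.1, fun x _ α => trivial,
      fun α F hF => absurd hF (by simp)⟩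
  · intro F t hFt hfin ih hsub
    obtain ⟨G, hGτ, hGsm, hGsub⟩ := ih fun H hH => hsub (Set.mem_insert_of_mem _ hH)
    have hFτ : F ∈ τ := hsub (Set.mem_insert _ _)
    refine ⟨eInter2 F G, hτ.2.2.2.2 F hFτ G hGτ, ?_, ?_⟩
    · intro x hx
      exact smem_SS ⟨hx F (Set.mem_insert _ _),
        hGsm x fun H hH => hx H (Set.mem_insert_of_mem _ hH)⟩
    · rintro α F' hF' a ⟨x, ⟨h1, h2⟩, rfl⟩
      rcases hF' with rfl | hF'
      · exact h1 α
      · exact hGsub α F' hF' (h2 α)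

lemma eCompl_mem {τ : Set (SoftSet X A)} (hτ : IsETopology τ) (hH : IsEHausdorff τ)
    {C : SoftSet X A} (hC : IsECompactSet τ C) : eCompl C ∈ τ := by
  classical
  obtain ⟨hInS, hInSc, hcov⟩ := hC
  rcases hInS with hnull | hne
  · -- `C` is the null soft set: its elementary complement is the absolute soft set.
    have h : eCompl C = absSoft X A := by
      funext α; ext a
      simp only [absSoft, Set.mem_univ, iff_true]
      exact ⟨fun _ => a, fun β => by simp [hnull β], rfl⟩
    rw [h]; exact hτ.2.2.1
  rcases hInSc with hfull | hcne
  · -- `C` is the absolute soft set: its elementary complement is the null soft set.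
    have h : eCompl C = nullSoft X A := by
      funext α; ext a
      simp only [nullSoft, Set.mem_empty_iff_false, iff_false]
      rintro ⟨x, hx, rfl⟩
      have hu : C α = Set.univ := Set.compl_empty_iff.1 (hfull α)
      exact hx α (by rw [hu]; trivial)
    rw [h]; exact hτ.2.1
  have hCne : ∀ β, (C β).Nonempty := fun β => Set.nonempty_iff_ne_empty.2 (hne β)
  have hcne' : ∀ β, ((C β)ᶜ).Nonempty := fun β => Set.nonempty_iff_ne_empty.2 (hcne β)
  -- key separation: every soft element avoiding `C` has an open neighborhood disjoint from `C`
  have key : ∀ x : A → X, (∀ β, x β ∉ C β) →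
      ∃ G ∈ τ, smem x G ∧ ∀ β, G β ∩ C β = ∅ := by
    intro x hx
    have sep : ∀ y : A → X, smem y C →
        ∃ F ∈ τ, ∃ G ∈ τ, smem x F ∧ smem y G ∧ ∀ β, F β ∩ G β = ∅ := by
      intro y hy
      exact hH x y (fun β => trivial) (fun β => trivial) (fun β h => hx β (h ▸ hy β))
    choose! Fo hFo Go hGo hxFo hyGo hdisj using sep
    set sC : Set (SoftSet X A) := {G | ∃ y, smem y C ∧ G = Go y} with hsC
    have hsCτ : sC ⊆ τ := by rintro G ⟨y, hy, rfl⟩; exact hGo y hy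
    have hcover : softSubset C (eUnionSet sC) := by
      intro β b hb
      obtain ⟨y, hy, rfl⟩ := exists_smem_of_mem hCne hb
      exact ⟨y, ⟨Go y, ⟨y, hy, rfl⟩, hyGo y hy⟩, rfl⟩
    obtain ⟨t, hts, htfin, htcov⟩ := hcov sC hsCτ hcover
    choose yw hyw hGow using fun (F : t) => hts F.2
    haveI := htfin.to_subtype
    set u : Set (SoftSet X A) := Set.range fun F : t => Fo (yw F) with hu
    have hufin : u.Finite := Set.finite_range _
    have huτ : u ⊆ τ := by rintro H ⟨F, rfl⟩; exact hFo (yw F) (hyw F)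
    obtain ⟨G, hGτ, hGsm, hGsub⟩ := finite_inter hτ hufin huτ
    refine ⟨G, hGτ, hGsm x ?_, ?_⟩
    · rintro H ⟨F, rfl⟩; exact hxFo (yw F) (hyw F)
    · intro β
      rw [Set.eq_empty_iff_forall_notMem]
      rintro b ⟨hbG, hbC⟩
      obtain ⟨z, ⟨F, hFt, hzF⟩, hzb⟩ := htcov β hbC
      have hbF : b ∈ F β := hzb ▸ hzF β
      have hbGo : b ∈ Go (yw ⟨F, hFt⟩) β := by
        have := hGow ⟨F, hFt⟩; rw [← this]; exact hbF
      have hbFo : b ∈ Fo (yw ⟨F, hFt⟩) β :=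
        hGsub β _ ⟨⟨F, hFt⟩, rfl⟩ hbG
      have := hdisj (yw ⟨F, hFt⟩) (hyw ⟨F, hFt⟩) β
      rw [Set.eq_empty_iff_forall_notMem] at this
      exact this b ⟨hbFo, hbGo⟩
  -- the elementary complement equals the union of the opens disjoint from `C`
  set s₀ : Set (SoftSet X A) := {G | G ∈ τ ∧ ∀ β, G β ∩ C β = ∅} with hs₀
  have h : eCompl C = eUnionSet s₀ := by
    funext α; ext a
    constructor
    · rintro ⟨x, hx, rfl⟩
      obtain ⟨G, hGτ, hxG, hGd⟩ := key x hx
      exact ⟨x, ⟨G, ⟨hGτ, hGd⟩, hxG⟩, rfl⟩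
    · rintro ⟨x, ⟨F, ⟨hFτ, hFd⟩, hxF⟩, rfl⟩
      have hxα : x α ∉ C α := by
        intro h
        have := hFd α
        rw [Set.eq_empty_iff_forall_notMem] at this
        exact this (x α) ⟨hxF α, h⟩
      choose c hc using hcne'
      refine ⟨Function.update c α (x α), ?_, Function.update_self _ _ _⟩
      intro β
      by_cases hβ : β = α
      · subst hβ; simpa using hxα
      · simpa [Function.update_of_ne hβ] using hc β
  rw [h]; exact hτ.2.2.2.1 s₀ fun G hG => hG.1

end Aux



/-- in a soft e-compact soft e-Hausdorff space with pointwise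
intersections of open sets in `S(X̃)`, a nonnull elementary intersection of a
family of soft e-compact sets is a soft e-compact set. -/
theorem stmt11 {X A : Type*} {ι : Type*}
    (τ : Set (SoftSet X A)) (hτ : IsETopology τ)
    (hqc : IsEQuasiCompact τ) (hH : IsEHausdorff τ)
    (hint : ∀ O₁ ∈ τ, ∀ O₂ ∈ τ, InS (fun α => O₁ α ∩ O₂ α))
    (K : ι → SoftSet X A) (hK : ∀ i, IsECompactSet τ (K i))
    (hne : eInterFam K ≠ nullSoft X A) :
    IsECompactSet τ (eInterFam K) := by
  classical
  obtain ⟨x₀, hx₀⟩ : ∃ x : A → X, ∀ i, smem x (K i) := by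
    by_contra h
    push_neg at h
    apply hne
    funext α; ext a
    simp only [nullSoft, Set.mem_empty_iff_false, iff_false]
    rintro ⟨x, hx, rfl⟩
    obtain ⟨i, hi⟩ := h x
    exact hi (hx i)
  have hJmem : ∀ (α : A) (a : X), (∀ i, a ∈ K i α) → a ∈ eInterFam K α := by
    intro α a ha
    refine ⟨Function.update x₀ α a, fun i β => ?_, Function.update_self _ _ _⟩
    by_cases hβ : β = α
    · subst hβ; simpa using ha i
    · simpa [Function.update_of_ne hβ] using hx₀ i β
  have hJsub : ∀ (α : A) (a : X), a ∈ eInterFam K α → ∀ i, a ∈ K i α := by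
    rintro α a ⟨x, hx, rfl⟩ i
    exact hx i α
  refine ⟨Or.inr fun α => ?_, ?_, ?_⟩
  · exact (Set.nonempty_iff_ne_empty.1 ⟨x₀ α, x₀, hx₀, rfl⟩)
  · by_cases hall : ∀ i, ∀ α' : A, K i α' = Set.univ
    · refine Or.inl fun α => Set.compl_empty_iff.2 ?_
      rw [Set.eq_univ_iff_forall]
      intro a
      exact hJmem α a fun i => by rw [hall i α]; trivial
    · push_neg at hall
      obtain ⟨i, α', hk⟩ := hall
      rcases (hK i).2.1 with hl | hr
      · exact absurd (Set.compl_empty_iff.1 (hl α')) hk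
      · refine Or.inr fun α => ?_
        obtain ⟨b, hb⟩ := Set.nonempty_iff_ne_empty.2 (hr α)
        refine Set.nonempty_iff_ne_empty.1 ⟨b, fun hbJ => hb (hJsub α b hbJ i)⟩
  · intro s hs hcov
    rcases isEmpty_or_nonempty ι with hι | hι
    · have habs : eUnionSet s = absSoft X A := by
        funext α
        refine Set.eq_univ_of_univ_subset fun a _ => ?_
        exact hcov α (hJmem α a fun i => (hι.false i).elim)
      obtain ⟨t, hts, htfin, hteq⟩ := hqc s hs habs
      exact ⟨t, hts, htfin, fun α a _ => by rw [hteq]; trivial⟩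
    · obtain ⟨i₀⟩ := hι
      set E : Set (SoftSet X A) := Set.range fun i => eCompl (K i) with hE
      have hs' : s ∪ E ⊆ τ := by
        rintro F (hF | ⟨i, rfl⟩)
        · exact hs hF
        · exact eCompl_mem hτ hH (hK i)
      have hcov' : softSubset (K i₀) (eUnionSet (s ∪ E)) := by
        intro α a ha
        by_cases hall : ∀ i, a ∈ K i α
        · exact eUnionSet_mono Set.subset_union_left α (hcov α (hJmem α a hall))
        · push_neg at hall
          obtain ⟨i, hi⟩ := hall
          rcases (hK i).2.1 with hl | hr
          · exact absurd (by rw [Set.compl_empty_iff.1 (hl α)]; trivial) hi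
          · have hcne : ∀ β, ((K i β)ᶜ).Nonempty :=
              fun β => Set.nonempty_iff_ne_empty.2 (hr β)
            choose c hc using hcne
            refine ⟨Function.update c α a,
              ⟨eCompl (K i), Or.inr ⟨i, rfl⟩, smem_SS ?_⟩, Function.update_self _ _ _⟩
            intro β
            by_cases hβ : β = α
            · subst hβ; simpa using hi
            · simpa [Function.update_of_ne hβ] using hc β
      obtain ⟨t', ht's', ht'fin, ht'cov⟩ := (hK i₀).2.2 (s ∪ E) hs' hcov'
      refine ⟨t' ∩ s, Set.inter_subset_right, ht'fin.inter_of_left s, ?_⟩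
      intro α a haJ
      have haK : a ∈ K i₀ α := hJsub α a haJ i₀
      obtain ⟨z, ⟨F, hFt', hzF⟩, rfl⟩ := ht'cov α haK
      by_cases hFs : F ∈ s
      · exact ⟨z, ⟨F, ⟨hFt', hFs⟩, hzF⟩, rfl⟩
      · exfalso
        rcases ht's' hFt' with h | ⟨i, rfl⟩
        · exact hFs h
        · obtain ⟨w, hw, hwz⟩ := hzF α
          exact hw α (by rw [hwz]; exact hJsub α (z α) haJ i)
end

section
/- Let (X̃, τ, A) be a soft e-compact soft e-Hausdorff space such that pointwise intersections of members of τ lie in S(X̃). Then (X̃, τ, A) is soft e-regular: for every soft e-closed set F and every soft element y with y(α) ∉ F(α) for all α ∈ A, there exist G, H ∈ τ with F ⊆̃ G, y ∈̃ H, and the elementary intersection of G and H equal to the null soft set. -/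
open SoftE


/-- Finite elementary intersections of separating neighborhoods of `y`. -/
lemma finInterAux {X A : Type*} (τ : Set (SoftSet X A)) (hτ : IsETopology τ)
    (y : A → X) :
    ∀ L : List (SoftSet X A),
      (∀ S ∈ L, ∃ K, K ∈ τ ∧ smem y K ∧ ∀ α, S α ∩ K α = ∅) →
      ∃ H, H ∈ τ ∧ smem y H ∧ ∀ S ∈ L, ∀ α, S α ∩ H α = ∅ := by
  intro L
  induction L with
  | nil =>
      intro _
      exact ⟨absSoft X A, hτ.2.2.1, fun α => Set.mem_univ _, by simp⟩
  | cons S L ih =>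
      intro h
      obtain ⟨K, hKτ, hyK, hKd⟩ := h S (by simp)
      obtain ⟨H, hHτ, hyH, hHd⟩ := ih (fun S' hS' => h S' (by simp [hS']))
      refine ⟨eInter2 K H, hτ.2.2.2.2 K hKτ H hHτ, fun α => ⟨y, ⟨hyK, hyH⟩, rfl⟩, ?_⟩
      have hsub : ∀ α, eInter2 K H α ⊆ K α ∩ H α := by
        rintro α a ⟨w, ⟨h1, h2⟩, rfl⟩
        exact ⟨h1 α, h2 α⟩
      intro S' hS' α
      rcases List.mem_cons.mp hS' with rfl | hS'
      · apply Set.eq_empty_of_subset_empty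
        rintro a ⟨ha1, ha2⟩
        have := (hsub α ha2).1
        have : a ∈ S' α ∩ K α := ⟨ha1, this⟩
        rw [hKd α] at this
        exact this
      · apply Set.eq_empty_of_subset_empty
        rintro a ⟨ha1, ha2⟩
        have := (hsub α ha2).2
        have : a ∈ S' α ∩ H α := ⟨ha1, this⟩
        rw [hHd S' hS' α] at this
        exact this

/-- a soft e-compact soft e-Hausdorff space (with pointwise
intersections of open sets in `S(X̃)`) is soft e-regular. -/
theorem stmt13 {X A : Type*}
    (τ : Set (SoftSet X A)) (hτ : IsETopology τ)
    (hqc : IsEQuasiCompact τ) (hH : IsEHausdorff τ)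
    (hint : ∀ O₁ ∈ τ, ∀ O₂ ∈ τ, InS (fun α => O₁ α ∩ O₂ α))
    (F : SoftSet X A) (hF : IsEClosed τ F)
    (y : A → X) (hy : ∀ α, y α ∉ F α) :
    ∃ G ∈ τ, ∃ H ∈ τ, softSubset F G ∧ smem y H ∧
      eInter2 G H = nullSoft X A := by
  classical
  rcases hF.1 with hFempty | hFne
  · -- F is empty everywhere
    refine ⟨nullSoft X A, hτ.2.1, absSoft X A, hτ.2.2.1, ?_, fun α => Set.mem_univ _, ?_⟩
    · intro α a ha; rw [hFempty α] at ha; exact absurd ha (Set.notMem_empty _)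
    · funext α
      apply Set.eq_empty_of_subset_empty
      rintro a ⟨z, ⟨hz, _⟩, rfl⟩
      exact absurd (hz α) (Set.notMem_empty _)
  · -- F is nonempty everywhere
    have hne : ∀ β, (F β).Nonempty := fun β => Set.nonempty_iff_ne_empty.mpr (hFne β)
    choose c hc using hne
    -- the cover
    set P : Set (SoftSet X A) :=
      {S | S ∈ τ ∧ ∃ K, K ∈ τ ∧ smem y K ∧ ∀ α, S α ∩ K α = ∅} with hP
    set s : Set (SoftSet X A) := insert (eCompl F) P with hs
    have hsτ : s ⊆ τ := by
      rintro S hS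
      rcases hS with rfl | hS
      · exact hF.2.2
      · exact hS.1
    have hcover : eUnionSet s = absSoft X A := by
      funext α
      apply Set.eq_univ_of_forall
      intro a
      by_cases haF : a ∈ F α
      · -- use a Hausdorff separating open around a soft element through a
        set x : A → X := Function.update c α a with hx
        have hxF : smem x F := by
          intro β
          by_cases hβ : β = α
          · subst hβ; simp [hx, haF]
          · simpa [hx, Function.update_of_ne hβ] using hc β
        obtain ⟨G', hG'τ, H', hH'τ, hxG', hyH', hdis⟩ :=
          hH x y (fun β => Set.mem_univ _) (fun β => Set.mem_univ _)
            (fun β => by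
              intro hxy
              exact hy β (hxy ▸ hxF β))
        refine ⟨x, ⟨G', Or.inr ⟨hG'τ, H', hH'τ, hyH', hdis⟩, hxG'⟩, ?_⟩
        simp [hx]
      · -- use eCompl F
        set z : A → X := Function.update y α a with hz
        have hzF : ∀ β, z β ∉ F β := by
          intro β
          by_cases hβ : β = α
          · subst hβ; simpa [hz] using haF
          · simpa [hz, Function.update_of_ne hβ] using hy β
        refine ⟨z, ⟨eCompl F, Or.inl rfl, fun β => ⟨z, hzF, rfl⟩⟩, ?_⟩
        simp [hz]
    obtain ⟨t, hts, htfin, htU⟩ := hqc s hsτ hcover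
    set t' : Set (SoftSet X A) := t \ {eCompl F} with ht'
    have ht'P : ∀ S ∈ t', S ∈ P := by
      rintro S ⟨hSt, hSne⟩
      rcases hts hSt with rfl | hS
      · exact absurd rfl hSne
      · exact hS
    have ht'τ : t' ⊆ τ := fun S hS => (ht'P S hS).1
    have ht'fin : t'.Finite := htfin.diff
    -- G
    refine ⟨eUnionSet t', hτ.2.2.2.1 t' ht'τ, ?_⟩
    -- H via auxiliary lemma
    set L : List (SoftSet X A) := ht'fin.toFinset.toList with hL
    have hLmem : ∀ S, S ∈ L ↔ S ∈ t' := by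
      intro S
      rw [hL, Finset.mem_toList, Set.Finite.mem_toFinset]
    obtain ⟨H, hHτ, hyH, hHd⟩ := finInterAux τ hτ y L
      (fun S hS => (ht'P S ((hLmem S).mp hS)).2)
    refine ⟨H, hHτ, ?_, hyH, ?_⟩
    · -- softSubset F (eUnionSet t')
      intro α a haF
      have : a ∈ eUnionSet t α := by
        rw [htU]; exact Set.mem_univ a
      obtain ⟨z, ⟨S, hSt, hzS⟩, rfl⟩ := this
      have hSne : S ≠ eCompl F := by
        rintro rfl
        obtain ⟨w, hw, hwz⟩ := hzS α
        exact hw α (hwz ▸ haF)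
      exact ⟨z, ⟨S, ⟨hSt, hSne⟩, hzS⟩, rfl⟩
    · -- disjointness
      funext α
      apply Set.eq_empty_of_subset_empty
      rintro a ⟨z, ⟨hzG, hzH⟩, rfl⟩
      obtain ⟨w, ⟨S, hSt', hwS⟩, hwz⟩ := hzG α
      have hzSα : z α ∈ S α := hwz ▸ hwS α
      have hzHα : z α ∈ H α := hzH α
      have : z α ∈ S α ∩ H α := ⟨hzSα, hzHα⟩
      rw [hHd S ((hLmem S).mpr hSt') α] at this
      exact this
end

section
/- Let (X̃, τ, A) be a soft e-compact soft e-Hausdorff space such that pointwise intersections of members of τ lie in S(X̃). Then (X̃, τ, A) is soft e-normal: for any two soft e-closed sets F₁, F₂ with F₁(α) ∩ F₂(α) = ∅ for all α ∈ A, there exist G₁, G₂ ∈ τ with F₁ ⊆̃ G₁, F₂ ⊆̃ G₂, and the elementary intersection G₁ ⋒ G₂ equal to the null soft set. -/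
open SoftE

section Aux

variable {X A : Type*}

lemma aux_extend (S : SoftSet X A) (hS : ∀ β, (S β).Nonempty) {α : A} {a : X}
    (ha : a ∈ S α) : ∃ x : A → X, smem x S ∧ x α = a := by
  classical
  refine ⟨Function.update (fun β => (hS β).some) α a, ?_, by simp⟩
  intro β
  rcases eq_or_ne β α with rfl | hβ
  · simpa using ha
  · rw [Function.update_of_ne hβ]; exact (hS β).some_mem

lemma aux_eInter2_eq (O₁ O₂ : SoftSet X A) (h : InS (fun α => O₁ α ∩ O₂ α)) :
    eInter2 O₁ O₂ = fun α => O₁ α ∩ O₂ α := by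
  funext α; ext a
  constructor
  · rintro ⟨x, ⟨h1, h2⟩, rfl⟩; exact ⟨h1 α, h2 α⟩
  · intro ha
    rcases h with h | h
    · have he : O₁ α ∩ O₂ α = ∅ := h α
      rw [he] at ha; exact ha.elim
    · have hne : ∀ β, (O₁ β ∩ O₂ β).Nonempty := fun β =>
        Set.nonempty_iff_ne_empty.2 (h β)
      obtain ⟨x, hx, hxa⟩ := aux_extend (fun β => O₁ β ∩ O₂ β) hne ha
      exact ⟨x, ⟨fun β => (hx β).1, fun β => (hx β).2⟩, hxa⟩

def listInter (l : List (SoftSet X A)) : SoftSet X A := l.foldr eInter2 (absSoft X A)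

lemma aux_listInter_spec (τ : Set (SoftSet X A)) (hτ : IsETopology τ)
    (hint : ∀ O₁ ∈ τ, ∀ O₂ ∈ τ, InS (fun α => O₁ α ∩ O₂ α))
    (Q : SoftSet X A → Prop) (hQabs : Q (absSoft X A))
    (hQinter : ∀ U₁ U₂, Q U₁ → Q U₂ → Q (fun α => U₁ α ∩ U₂ α)) :
    ∀ l : List (SoftSet X A), (∀ O ∈ l, O ∈ τ) → (∀ O ∈ l, Q O) →
      listInter l ∈ τ ∧ Q (listInter l) ∧
      ∀ α a, a ∈ listInter l α ↔ ∀ O ∈ l, a ∈ O α := by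
  intro l
  induction l with
  | nil =>
      intro _ _
      refine ⟨hτ.2.2.1, hQabs, ?_⟩
      intro α a
      simp [listInter, absSoft]
  | cons F l ih =>
      intro hl hQl
      obtain ⟨ih1, ih2, ih3⟩ := ih (fun O hO => hl O (.tail _ hO)) (fun O hO => hQl O (.tail _ hO))
      have hF : F ∈ τ := hl F (.head _)
      have heq : listInter (F :: l) = fun α => F α ∩ listInter l α := by
        have h0 : listInter (F :: l) = eInter2 F (listInter l) := rfl
        rw [h0, aux_eInter2_eq _ _ (hint F hF _ ih1)]
      refine ⟨hτ.2.2.2.2 F hF _ ih1, ?_, ?_⟩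
      · rw [heq]; exact hQinter _ _ (hQl F (.head _)) ih2
      · intro α a
        rw [heq]
        show a ∈ F α ∩ listInter l α ↔ _
        rw [Set.mem_inter_iff, ih3 α a]
        constructor
        · rintro ⟨h1, h2⟩ O hO
          rcases List.mem_cons.1 hO with rfl | hO
          · exact h1
          · exact h2 O hO
        · intro h
          exact ⟨h F (.head _), fun O hO => h O (.tail _ hO)⟩

lemma aux_key [Nonempty A] (τ : Set (SoftSet X A)) (hτ : IsETopology τ)
    (hqc : IsEQuasiCompact τ)
    (hint : ∀ O₁ ∈ τ, ∀ O₂ ∈ τ, InS (fun α => O₁ α ∩ O₂ α))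
    (F : SoftSet X A) (hFτ : eCompl F ∈ τ)
    (hFne : ∀ α, (F α).Nonempty) (hFc : ∀ α, ((F α)ᶜ).Nonempty)
    (Q : SoftSet X A → Prop) (hQabs : Q (absSoft X A))
    (hQinter : ∀ U₁ U₂, Q U₁ → Q U₂ → Q (fun α => U₁ α ∩ U₂ α))
    (U V : (A → X) → SoftSet X A)
    (h : ∀ y, smem y F → U y ∈ τ ∧ V y ∈ τ ∧ smem y (V y) ∧ Q (U y) ∧
        ∀ α, U y α ∩ V y α = ∅) :
    ∃ W ∈ τ, ∃ G ∈ τ, Q W ∧ softSubset F G ∧ ∀ α, W α ∩ G α = ∅ := by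
  classical
  set s : Set (SoftSet X A) := insert (eCompl F) {O | ∃ y, smem y F ∧ O = V y} with hs
  have hsτ : s ⊆ τ := by
    intro O hO
    rcases Set.mem_insert_iff.1 hO with rfl | ⟨y, hy, rfl⟩
    · exact hFτ
    · exact (h y hy).2.1
  have hcov : eUnionSet s = absSoft X A := by
    funext α; ext a
    simp only [absSoft, Set.mem_univ, iff_true]
    by_cases ha : a ∈ F α
    · obtain ⟨y, hy, hyα⟩ := aux_extend F hFne ha
      exact ⟨y, ⟨V y, Set.mem_insert_iff.2 (Or.inr ⟨y, hy, rfl⟩), (h y hy).2.2.1⟩, hyα⟩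
    · obtain ⟨z, hz, hzα⟩ := aux_extend (fun β => (F β)ᶜ) hFc ha
      exact ⟨z, ⟨eCompl F, Set.mem_insert_iff.2 (Or.inl rfl),
        fun β => ⟨z, fun γ => hz γ, rfl⟩⟩, hzα⟩
  obtain ⟨t, hts, htfin, htcov⟩ := hqc s hsτ hcov
  set t' : Set (SoftSet X A) := t \ {eCompl F} with ht'
  have ht'τ : t' ⊆ τ := fun O hO => hsτ (hts hO.1)
  have hG : eUnionSet t' ∈ τ := hτ.2.2.2.1 t' ht'τ
  have hFG : softSubset F (eUnionSet t') := by
    intro α a ha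
    have hmem : a ∈ eUnionSet t α := by rw [htcov]; trivial
    obtain ⟨z, ⟨O, hOt, hzO⟩, hza⟩ := hmem
    have hOne : O ∉ ({eCompl F} : Set (SoftSet X A)) := by
      intro hOe
      rw [Set.mem_singleton_iff] at hOe
      subst hOe
      obtain ⟨w, hw, hwα⟩ := hzO α
      exact hw α (by rw [hwα, hza]; exact ha)
    exact ⟨z, ⟨O, ⟨hOt, hOne⟩, hzO⟩, hza⟩
  have hXne : Nonempty X := ⟨(hFne (Classical.arbitrary A)).some⟩
  have hchoice : ∀ O ∈ t', ∃ y, smem y F ∧ O = V y := by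
    intro O hO
    rcases Set.mem_insert_iff.1 (hts hO.1) with h1 | h2
    · exact absurd (Set.mem_singleton_iff.2 h1) hO.2
    · exact h2
  set g : SoftSet X A → (A → X) := fun O =>
    if hO : ∃ y, smem y F ∧ O = V y then hO.choose else fun _ => Classical.arbitrary X
    with hg
  have hgspec : ∀ O ∈ t', smem (g O) F ∧ O = V (g O) := by
    intro O hO
    have hO' := hchoice O hO
    rw [hg]
    simp only [dif_pos hO']
    exact ⟨hO'.choose_spec.1, hO'.choose_spec.2⟩
  obtain ⟨l, hl⟩ : ∃ l : List (SoftSet X A), ∀ O, O ∈ l ↔ O ∈ t' := by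
    have hfin : t'.Finite := htfin.subset Set.diff_subset
    exact ⟨hfin.toFinset.toList, fun O => by simp⟩
  set ly := l.map g with hly
  have hlyF : ∀ y ∈ ly, smem y F := by
    intro y hy
    obtain ⟨O, hO, rfl⟩ := List.mem_map.1 hy
    exact (hgspec O ((hl O).1 hO)).1
  obtain ⟨hWτ, hWQ, hWmem⟩ := aux_listInter_spec τ hτ hint Q hQabs hQinter (ly.map U)
    (by intro P hP; obtain ⟨y, hy, rfl⟩ := List.mem_map.1 hP; exact (h y (hlyF y hy)).1)
    (by intro P hP; obtain ⟨y, hy, rfl⟩ := List.mem_map.1 hP; exact (h y (hlyF y hy)).2.2.2.1)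
  refine ⟨listInter (ly.map U), hWτ, eUnionSet t', hG, hWQ, hFG, ?_⟩
  intro α
  ext a
  simp only [Set.mem_inter_iff, Set.mem_empty_iff_false, iff_false, not_and]
  intro hW hGa
  obtain ⟨z, ⟨O, hOt', hzO⟩, hza⟩ := hGa
  obtain ⟨hgF, hOV⟩ := hgspec O hOt'
  have haV : a ∈ V (g O) α := by rw [← hOV, ← hza]; exact hzO α
  have haU : a ∈ U (g O) α := (hWmem α a).1 hW (U (g O))
      (List.mem_map.2 ⟨g O, List.mem_map.2 ⟨O, (hl O).2 hOt', rfl⟩, rfl⟩)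
  have hd := (h (g O) hgF).2.2.2.2 α
  have : a ∈ U (g O) α ∩ V (g O) α := ⟨haU, haV⟩
  rw [hd] at this
  exact this

end Aux


/-- a soft e-compact soft e-Hausdorff space (with pointwise
intersections of open sets in `S(X̃)`) is soft e-normal. -/
theorem stmt14 {X A : Type*}
    (τ : Set (SoftSet X A)) (hτ : IsETopology τ)
    (hqc : IsEQuasiCompact τ) (hH : IsEHausdorff τ)
    (hint : ∀ O₁ ∈ τ, ∀ O₂ ∈ τ, InS (fun α => O₁ α ∩ O₂ α))
    (F₁ F₂ : SoftSet X A)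
    (hF₁ : IsEClosed τ F₁) (hF₂ : IsEClosed τ F₂)
    (hdisj : ∀ α, F₁ α ∩ F₂ α = ∅) :
    ∃ G₁ ∈ τ, ∃ G₂ ∈ τ, softSubset F₁ G₁ ∧ softSubset F₂ G₂ ∧
      eInter2 G₁ G₂ = nullSoft X A := by
  classical
  obtain ⟨hF₁S, hF₁c, hF₁τ⟩ := hF₁
  obtain ⟨hF₂S, hF₂c, hF₂τ⟩ := hF₂
  by_cases hA : Nonempty A
  swap
  · refine ⟨nullSoft X A, hτ.2.1, nullSoft X A, hτ.2.1,
      fun α => (hA ⟨α⟩).elim, fun α => (hA ⟨α⟩).elim, funext fun α => (hA ⟨α⟩).elim⟩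
  haveI := hA
  rcases hF₁S with h1 | h1
  · refine ⟨nullSoft X A, hτ.2.1, absSoft X A, hτ.2.2.1, ?_, ?_, ?_⟩
    · intro α; rw [h1 α]; exact Set.empty_subset _
    · intro α a _; trivial
    · funext α
      refine Set.eq_empty_iff_forall_notMem.2 ?_
      rintro a ⟨x, ⟨hx1, _⟩, _⟩
      exact hx1 (Classical.arbitrary A)
  rcases hF₂S with h2 | h2
  · refine ⟨absSoft X A, hτ.2.2.1, nullSoft X A, hτ.2.1, ?_, ?_, ?_⟩
    · intro α a _; trivial
    · intro α; rw [h2 α]; exact Set.empty_subset _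
    · funext α
      refine Set.eq_empty_iff_forall_notMem.2 ?_
      rintro a ⟨x, ⟨_, hx2⟩, _⟩
      exact hx2 (Classical.arbitrary A)
  have hne₁ : ∀ α, (F₁ α).Nonempty := fun α => Set.nonempty_iff_ne_empty.2 (h1 α)
  have hne₂ : ∀ α, (F₂ α).Nonempty := fun α => Set.nonempty_iff_ne_empty.2 (h2 α)
  have hc₁ : ∀ α, ((F₁ α)ᶜ).Nonempty := by
    intro α
    obtain ⟨a, ha⟩ := hne₂ α
    exact ⟨a, fun h => Set.eq_empty_iff_forall_notMem.1 (hdisj α) a ⟨h, ha⟩⟩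
  have hc₂ : ∀ α, ((F₂ α)ᶜ).Nonempty := by
    intro α
    obtain ⟨a, ha⟩ := hne₁ α
    exact ⟨a, fun h => Set.eq_empty_iff_forall_notMem.1 (hdisj α) a ⟨ha, h⟩⟩
  have step1 : ∀ x : A → X, smem x F₁ →
      ∃ W ∈ τ, ∃ G ∈ τ, smem x W ∧ softSubset F₂ G ∧ ∀ α, W α ∩ G α = ∅ := by
    intro x hx
    have hsep : ∀ y, smem y F₂ → ∃ P : SoftSet X A × SoftSet X A,
        P.1 ∈ τ ∧ P.2 ∈ τ ∧ smem y P.2 ∧ smem x P.1 ∧ ∀ α, P.1 α ∩ P.2 α = ∅ := by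
      intro y hy
      have hxy : ∀ α, x α ≠ y α := by
        intro α heq
        exact Set.eq_empty_iff_forall_notMem.1 (hdisj α) (x α) ⟨hx α, heq ▸ hy α⟩
      obtain ⟨P1, hP1, P2, hP2, hxP, hyP, hd⟩ :=
        hH x y (fun α => trivial) (fun α => trivial) hxy
      exact ⟨(P1, P2), hP1, hP2, hyP, hxP, hd⟩
    obtain ⟨W, hW, G, hG, hQ, hFG, hd⟩ := aux_key τ hτ hqc hint F₂ hF₂τ hne₂ hc₂
      (fun O => smem x O) (fun α => trivial) (fun U₁ U₂ hu1 hu2 α => ⟨hu1 α, hu2 α⟩)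
      (fun y => if hy : smem y F₂ then (hsep y hy).choose.1 else absSoft X A)
      (fun y => if hy : smem y F₂ then (hsep y hy).choose.2 else absSoft X A)
      (by
        intro y hy
        simp only [dif_pos hy]
        have hsp := (hsep y hy).choose_spec
        exact ⟨hsp.1, hsp.2.1, hsp.2.2.1, hsp.2.2.2.1, hsp.2.2.2.2⟩)
    exact ⟨W, hW, G, hG, hQ, hFG, hd⟩
  have hsep2 : ∀ x, smem x F₁ → ∃ P : SoftSet X A × SoftSet X A,
      P.1 ∈ τ ∧ P.2 ∈ τ ∧ smem x P.2 ∧ softSubset F₂ P.1 ∧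
      ∀ α, P.1 α ∩ P.2 α = ∅ := by
    intro x hx
    obtain ⟨W, hW, G, hG, hxW, hFG, hd⟩ := step1 x hx
    exact ⟨(G, W), hG, hW, hxW, hFG, fun α => by rw [Set.inter_comm]; exact hd α⟩
  obtain ⟨W, hW, G, hG, hQW, hFG, hd⟩ := aux_key τ hτ hqc hint F₁ hF₁τ hne₁ hc₁
    (fun O => softSubset F₂ O) (fun α a _ => trivial)
    (fun U₁ U₂ hu1 hu2 α a ha => ⟨hu1 α ha, hu2 α ha⟩)
    (fun x => if hx : smem x F₁ then (hsep2 x hx).choose.1 else absSoft X A)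
    (fun x => if hx : smem x F₁ then (hsep2 x hx).choose.2 else absSoft X A)
    (by
      intro x hx
      simp only [dif_pos hx]
      have hsp := (hsep2 x hx).choose_spec
      exact ⟨hsp.1, hsp.2.1, hsp.2.2.1, hsp.2.2.2.1, hsp.2.2.2.2⟩)
  refine ⟨G, hG, W, hW, hFG, hQW, ?_⟩
  funext α
  refine Set.eq_empty_iff_forall_notMem.2 ?_
  rintro a ⟨z, ⟨hz1, hz2⟩, rfl⟩
  have hmem : z α ∈ W α ∩ G α := ⟨hz2 α, hz1 α⟩
  rw [hd α] at hmem
  exact hmem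
end

section
/- Let (X̃, τ, A) be a soft e-locally compact space (soft e-Hausdorff, and every soft element x with soft neighborhood N admits a soft e-compact neighborhood K of x with K ⊆̃ N) such that pointwise intersections of members of τ lie in S(X̃). Then (X̃, τ, A) is a soft e-Baire space: for every countable family {F_i}_{i=1}^∞ of soft e-closed sets with soft interior equal to the null soft set, the elementary union ⋓_{i=1}^∞ F_i also has soft interior equal to the null soft set. -/
open SoftE



section Aux

variable {X A : Type*}

lemma choose_through (F : SoftSet X A) (hF : InS F) {β : A} {b : X} (hb : b ∈ F β) :
    ∃ w : A → X, smem w F ∧ w β = b := by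
  classical
  rcases hF with h | h
  · exact absurd hb (by simp [h β])
  · have hne : ∀ γ, (F γ).Nonempty := fun γ => Set.nonempty_iff_ne_empty.2 (h γ)
    refine ⟨fun γ => if hγ : γ = β then b else (hne γ).choose, fun γ => ?_, by simp⟩
    rcases eq_or_ne γ β with h1 | h1
    · subst h1; simpa using hb
    · simpa [h1] using (hne γ).choose_spec

lemma choose_avoider (F : SoftSet X A) (hne : ∀ γ, ∃ c, c ∉ F γ) {β : A} {b : X}
    (hb : b ∉ F β) : ∃ y : A → X, (∀ γ, y γ ∉ F γ) ∧ y β = b := by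
  classical
  refine ⟨fun γ => if hγ : γ = β then b else (hne γ).choose, fun γ => ?_, by simp⟩
  rcases eq_or_ne γ β with h1 | h1
  · subst h1; simpa using hb
  · simpa [h1] using (hne γ).choose_spec

lemma not_mem_of_mem_eCompl {F : SoftSet X A} {α : A} {a : X} (h : a ∈ eCompl F α) :
    a ∉ F α := by
  rcases h with ⟨y, hy, rfl⟩; exact hy α

lemma mem_eCompl (F : SoftSet X A) (hne : ∀ γ, ∃ c, c ∉ F γ) {α : A} {a : X}
    (ha : a ∉ F α) : a ∈ eCompl F α := by
  obtain ⟨y, hy, hyα⟩ := choose_avoider F hne ha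
  exact ⟨y, hy, hyα⟩

lemma sep_compact {τ : Set (SoftSet X A)} (hτ : IsETopology τ) (hH : IsEHausdorff τ)
    {K : SoftSet X A} (hK : IsECompactSet τ K) {y : A → X} (hy : ∀ γ, y γ ∉ K γ) :
    ∃ H ∈ τ, smem y H ∧ ∀ β, H β ∩ K β = ∅ := by
  classical
  set 𝒢 : Set (SoftSet X A) := {G | G ∈ τ ∧ ∃ H ∈ τ, smem y H ∧ ∀ β, G β ∩ H β = ∅}
    with h𝒢
  have h𝒢τ : 𝒢 ⊆ τ := fun G hG => hG.1
  have hcover : softSubset K (eUnionSet 𝒢) := by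
    intro β b hb
    obtain ⟨w, hw, hwβ⟩ := choose_through K hK.1 hb
    have hxy : ∀ γ, w γ ≠ y γ := fun γ hgy => hy γ (hgy ▸ hw γ)
    obtain ⟨G, hGτ, H, hHτ, hwG, hyH, hdisj⟩ :=
      hH w y (fun _ => Set.mem_univ _) (fun _ => Set.mem_univ _) hxy
    exact ⟨w, ⟨G, ⟨hGτ, H, hHτ, hyH, hdisj⟩, hwG⟩, hwβ⟩
  obtain ⟨t, ht𝒢, htfin, htcov⟩ := hK.2.2 𝒢 h𝒢τ hcover
  have main : ∀ u : Set (SoftSet X A), u.Finite → u ⊆ 𝒢 →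
      ∃ H ∈ τ, smem y H ∧ ∀ β, eUnionSet u β ∩ H β = ∅ := by
    intro u hufin
    refine Set.Finite.induction_on
      (motive := fun u _ => u ⊆ 𝒢 → ∃ H ∈ τ, smem y H ∧ ∀ β, eUnionSet u β ∩ H β = ∅)
      u hufin ?_ ?_
    · intro _
      refine ⟨absSoft X A, hτ.2.2.1, fun _ => Set.mem_univ _, fun β => ?_⟩
      apply Set.eq_empty_iff_forall_notMem.2
      rintro a ⟨⟨x, ⟨Q, hQ, -⟩, -⟩, -⟩
      exact Set.notMem_empty _ hQ
    · intro G u _ _ ih hsub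
      obtain ⟨H₁, hH₁τ, hyH₁, hd₁⟩ := ih (fun S hS => hsub (Set.mem_insert_of_mem _ hS))
      obtain ⟨-, H₂, hH₂τ, hyH₂, hd₂⟩ := hsub (Set.mem_insert _ _)
      refine ⟨eInter2 H₁ H₂, hτ.2.2.2.2 H₁ hH₁τ H₂ hH₂τ, smem_SS ⟨hyH₁, hyH₂⟩, fun β => ?_⟩
      apply Set.eq_empty_iff_forall_notMem.2
      rintro a ⟨⟨x, ⟨Q, hQ, hxQ⟩, hxβ⟩, ⟨z, ⟨hzH₁, hzH₂⟩, hzβ⟩⟩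
      rcases hQ with rfl | hQu
      · have : a ∈ Q β ∩ H₂ β := ⟨hxβ ▸ hxQ β, hzβ ▸ hzH₂ β⟩
        rw [hd₂ β] at this; exact Set.notMem_empty _ this
      · have : a ∈ eUnionSet u β ∩ H₁ β := ⟨⟨x, ⟨Q, hQu, hxQ⟩, hxβ⟩, hzβ ▸ hzH₁ β⟩
        rw [hd₁ β] at this; exact Set.notMem_empty _ this
  obtain ⟨H, hHτ, hyH, hd⟩ := main t htfin ht𝒢
  refine ⟨H, hHτ, hyH, fun β => ?_⟩
  apply Set.eq_empty_iff_forall_notMem.2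
  rintro a ⟨haH, haK⟩
  have : a ∈ eUnionSet t β ∩ H β := ⟨htcov β haK, haH⟩
  rw [hd β] at this; exact Set.notMem_empty _ this

lemma eCompl_compact_mem {τ : Set (SoftSet X A)} (hτ : IsETopology τ)
    (hH : IsEHausdorff τ) {K : SoftSet X A} (hK : IsECompactSet τ K) :
    eCompl K ∈ τ := by
  have heq : eCompl K = eUnionSet {H | H ∈ τ ∧ ∀ β, H β ∩ K β = ∅} := by
    funext α; ext a; constructor
    · rintro ⟨y, hy, rfl⟩
      obtain ⟨H, hHτ, hyH, hdisj⟩ := sep_compact hτ hH hK hy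
      exact ⟨y, ⟨H, ⟨hHτ, hdisj⟩, hyH⟩, rfl⟩
    · rintro ⟨x, ⟨H, ⟨hHτ, hdisj⟩, hxH⟩, rfl⟩
      refine ⟨x, fun γ hγ => ?_, rfl⟩
      have : x γ ∈ H γ ∩ K γ := ⟨hxH γ, hγ⟩
      rw [hdisj γ] at this; exact Set.notMem_empty _ this
  rw [heq]; exact hτ.2.2.2.1 _ (fun H hH' => hH'.1)

lemma step_lemma {τ : Set (SoftSet X A)} (hτ : IsETopology τ)
    (hint : ∀ O₁ ∈ τ, ∀ O₂ ∈ τ, InS (fun α => O₁ α ∩ O₂ α))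
    {U Fc : SoftSet X A} (hUτ : U ∈ τ) {xu : A → X} (hxu : smem xu U)
    (hFc : IsEClosed τ Fc) (hFnull : sInt τ Fc = nullSoft X A) (α₀ : A) :
    ∃ x : A → X, smem x U ∧ smem x (eCompl Fc) := by
  have hproper : ∀ γ, ∃ c, c ∉ Fc γ := by
    rcases hFc.2.1 with h | h
    · exfalso
      have huniv : ∀ γ, Fc γ = Set.univ := fun γ => by
        have := h γ
        simpa [relCompl, Set.compl_empty_iff] using this
      have hx : smem xu Fc := fun γ => by rw [huniv γ]; exact Set.mem_univ _
      have hmem : xu α₀ ∈ sInt τ Fc α₀ :=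
        ⟨xu, ⟨hx, U, hUτ, hxu, fun γ => by rw [huniv γ]; exact Set.subset_univ _⟩, rfl⟩
      rw [hFnull] at hmem; exact Set.notMem_empty _ hmem
    · intro γ
      obtain ⟨c, hc⟩ := Set.nonempty_iff_ne_empty.2 (h γ)
      exact ⟨c, hc⟩
  have hEx : ∃ γ a, a ∈ U γ ∧ a ∉ Fc γ := by
    by_contra hcon; push_neg at hcon
    have hx : smem xu Fc := fun γ => hcon γ _ (hxu γ)
    have hmem : xu α₀ ∈ sInt τ Fc α₀ :=
      ⟨xu, ⟨hx, U, hUτ, hxu, fun γ a ha => hcon γ a ha⟩, rfl⟩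
    rw [hFnull] at hmem; exact Set.notMem_empty _ hmem
  obtain ⟨γ₀, a, haU, haF⟩ := hEx
  have hins := hint U hUτ (eCompl Fc) hFc.2.2
  rcases hins with h | h
  · exfalso
    have this2 : a ∈ U γ₀ ∩ eCompl Fc γ₀ := ⟨haU, mem_eCompl Fc hproper haF⟩
    have h0 : U γ₀ ∩ eCompl Fc γ₀ = ∅ := h γ₀
    rw [h0] at this2
    exact Set.notMem_empty _ this2
  · have hne : ∀ γ, (U γ ∩ eCompl Fc γ).Nonempty :=
      fun γ => Set.nonempty_iff_ne_empty.2 (h γ)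
    choose x hx using hne
    exact ⟨x, fun γ => (hx γ).1, fun γ => (hx γ).2⟩

lemma build_step {τ : Set (SoftSet X A)} (hτ : IsETopology τ) (hH : IsEHausdorff τ)
    (hint : ∀ O₁ ∈ τ, ∀ O₂ ∈ τ, InS (fun α => O₁ α ∩ O₂ α))
    (hloc : ∀ (x : A → X) (N : SoftSet X A), IsNbd τ x N →
      ∃ K : SoftSet X A, IsECompactSet τ K ∧ IsNbd τ x K ∧ softSubset K N)
    (Fc : SoftSet X A) (hFc : IsEClosed τ Fc) (hFnull : sInt τ Fc = nullSoft X A)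
    (α₀ : A) (U : SoftSet X A) (hUτ : U ∈ τ) (hUx : ∃ x, smem x U) :
    ∃ K U' : SoftSet X A, IsECompactSet τ K ∧ eCompl K ∈ τ ∧ U' ∈ τ ∧
      (∃ x', smem x' U') ∧ softSubset U' K ∧ (∀ γ, K γ ⊆ U γ) ∧
      (∀ γ, ∀ a ∈ K γ, a ∉ Fc γ) := by
  obtain ⟨xu, hxu⟩ := hUx
  obtain ⟨x, hxU, hxE⟩ := step_lemma hτ hint hUτ hxu hFc hFnull α₀
  have hVτ : eInter2 U (eCompl Fc) ∈ τ := hτ.2.2.2.2 U hUτ _ hFc.2.2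
  have hxV : smem x (eInter2 U (eCompl Fc)) := smem_SS ⟨hxU, hxE⟩
  have hVslice : ∀ γ, ∀ a ∈ eInter2 U (eCompl Fc) γ, a ∈ U γ ∧ a ∉ Fc γ := by
    rintro γ a ⟨z, ⟨hzU, hzE⟩, rfl⟩
    exact ⟨hzU γ, not_mem_of_mem_eCompl (hzE γ)⟩
  have hVnbd : IsNbd τ x (eInter2 U (eCompl Fc)) := by
    refine ⟨?_, eInter2 U (eCompl Fc), hVτ, hxV, fun γ => subset_rfl⟩
    intro h
    have := hxV α₀
    rw [h] at this
    exact Set.notMem_empty _ this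
  obtain ⟨K, hKcomp, hKnbd, hKV⟩ := hloc x (eInter2 U (eCompl Fc)) hVnbd
  obtain ⟨-, U', hU'τ, hxU', hU'K⟩ := hKnbd
  exact ⟨K, U', hKcomp, eCompl_compact_mem hτ hH hKcomp, hU'τ, ⟨x, hxU'⟩, hU'K,
    fun γ a ha => (hVslice γ a (hKV γ ha)).1,
    fun γ a ha => (hVslice γ a (hKV γ ha)).2⟩

end Aux

/-- a soft e-locally compact space (with pointwise intersections
of open sets in `S(X̃)`) is a soft e-Baire space. -/
theorem stmt16 {X A : Type*}
    (τ : Set (SoftSet X A)) (hτ : IsETopology τ) (hH : IsEHausdorff τ)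
    (hint : ∀ O₁ ∈ τ, ∀ O₂ ∈ τ, InS (fun α => O₁ α ∩ O₂ α))
    (hloc : ∀ (x : A → X) (N : SoftSet X A), IsNbd τ x N →
      ∃ K : SoftSet X A, IsECompactSet τ K ∧ IsNbd τ x K ∧ softSubset K N) :
    ∀ F : ℕ → SoftSet X A, (∀ i, IsEClosed τ (F i)) →
      (∀ i, sInt τ (F i) = nullSoft X A) →
      sInt τ (eUnionFam F) = nullSoft X A := by
  intro F hFcl hFnull
  classical
  by_contra hcon
  have hA : ∃ α, ∃ a, a ∈ sInt τ (eUnionFam F) α := by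
    by_contra h; push_neg at h
    exact hcon (funext fun α => Set.eq_empty_iff_forall_notMem.2 (h α))
  obtain ⟨α₀, a₀, ha₀⟩ := hA
  obtain ⟨x₀, ⟨-, G₀, hG₀τ, hx₀G₀, hG₀sub⟩, -⟩ := ha₀
  have step : ∀ (n : ℕ) (U : SoftSet X A), ∃ K U' : SoftSet X A,
      U ∈ τ → (∃ x, smem x U) →
        IsECompactSet τ K ∧ eCompl K ∈ τ ∧ U' ∈ τ ∧ (∃ x', smem x' U') ∧
        softSubset U' K ∧ (∀ γ, K γ ⊆ U γ) ∧ (∀ γ, ∀ a ∈ K γ, a ∉ F n γ) := by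
    intro n U
    by_cases hUτ : U ∈ τ
    · by_cases hUx : ∃ x, smem x U
      · obtain ⟨K, U', h⟩ := build_step hτ hH hint hloc (F n) (hFcl n) (hFnull n) α₀ U hUτ hUx
        exact ⟨K, U', fun _ _ => h⟩
      · exact ⟨U, U, fun _ h => absurd h hUx⟩
    · exact ⟨U, U, fun h => absurd h hUτ⟩
  choose Kf Uf hstep using step
  let Us : ℕ → SoftSet X A := fun n => Nat.rec G₀ (fun k Uk => Uf k Uk) n
  have hUsucc : ∀ n, Us (n + 1) = Uf n (Us n) := fun _ => rfl
  have hInv : ∀ n, Us n ∈ τ ∧ ∃ x, smem x (Us n) := by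
    intro n; induction n with
    | zero => exact ⟨hG₀τ, x₀, hx₀G₀⟩
    | succ k ih =>
      have h := hstep k (Us k) ih.1 ih.2
      rw [hUsucc k] at *
      exact ⟨h.2.2.1, h.2.2.2.1⟩
  let Ks : ℕ → SoftSet X A := fun n => Kf n (Us n)
  have hprop : ∀ n, IsECompactSet τ (Ks n) ∧ eCompl (Ks n) ∈ τ ∧ Us (n + 1) ∈ τ ∧
      (∃ x', smem x' (Us (n + 1))) ∧ softSubset (Us (n + 1)) (Ks n) ∧
      (∀ γ, Ks n γ ⊆ Us n γ) ∧ (∀ γ, ∀ a ∈ Ks n γ, a ∉ F n γ) := by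
    intro n
    have h := hstep n (Us n) (hInv n).1 (hInv n).2
    rw [hUsucc n]
    exact h
  have hKne : ∀ n γ, (Ks n γ).Nonempty := by
    intro n γ
    obtain ⟨x', hx'⟩ := (hprop n).2.2.2.1
    exact ⟨x' γ, (hprop n).2.2.2.2.1 γ (hx' γ)⟩
  have hdec : ∀ n γ, Ks (n + 1) γ ⊆ Ks n γ := by
    intro n γ a ha
    exact (hprop n).2.2.2.2.1 γ ((hprop (n + 1)).2.2.2.2.2.1 γ ha)
  have hmono : ∀ m n, m ≤ n → ∀ γ, Ks n γ ⊆ Ks m γ := by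
    intro m n hmn
    induction hmn with
    | refl => exact fun γ => subset_rfl
    | @step k h ih => exact fun γ a ha => ih γ (hdec k γ ha)
  have hmain : ∃ γ a, ∀ n, a ∈ Ks n γ := by
    by_contra hc; push_neg at hc
    set s : Set (SoftSet X A) := {S | ∃ n, S = eCompl (Ks n)} with hs
    have hsτ : s ⊆ τ := by rintro S ⟨n, rfl⟩; exact (hprop n).2.1
    have hcover : softSubset (Ks 0) (eUnionSet s) := by
      intro β b hb
      obtain ⟨n, hn⟩ := hc β b
      have hproper : ∀ γ, ∃ c, c ∉ Ks n γ := by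
        rcases (hprop n).1.2.1 with h | h
        · exact absurd (h β) (by
            simp only [relCompl, Set.compl_empty_iff]
            intro heq
            exact hn (heq ▸ Set.mem_univ b))
        · intro γ
          obtain ⟨c, hcmem⟩ := Set.nonempty_iff_ne_empty.2 (h γ)
          exact ⟨c, hcmem⟩
      obtain ⟨y, hy, hyβ⟩ := choose_avoider (Ks n) hproper hn
      exact ⟨y, ⟨eCompl (Ks n), ⟨n, rfl⟩, fun γ => ⟨y, hy, rfl⟩⟩, hyβ⟩
    obtain ⟨t, hts, htfin, htcov⟩ := (hprop 0).1.2.2 s hsτ hcover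
    let idx : SoftSet X A → ℕ := fun S => if h : ∃ n, S = eCompl (Ks n) then h.choose else 0
    have hidx : ∀ S ∈ t, S = eCompl (Ks (idx S)) := by
      intro S hS
      have h : ∃ n, S = eCompl (Ks n) := hts hS
      simp only [idx, dif_pos h]
      exact h.choose_spec
    set N := htfin.toFinset.sup idx with hN
    have hidxle : ∀ S ∈ t, idx S ≤ N := fun S hS => Finset.le_sup (htfin.mem_toFinset.2 hS)
    obtain ⟨b, hbN⟩ := hKne N α₀
    have hb0 : b ∈ Ks 0 α₀ := hmono 0 N (Nat.zero_le N) α₀ hbN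
    obtain ⟨x, ⟨S, hSt, hxS⟩, hxβ⟩ := htcov α₀ hb0
    have hSe := hidx S hSt
    rw [hSe] at hxS
    have hnot : b ∉ Ks (idx S) α₀ := hxβ ▸ not_mem_of_mem_eCompl (hxS α₀)
    exact hnot (hmono (idx S) N (hidxle S hSt) α₀ hbN)
  obtain ⟨γ, a, hAll⟩ := hmain
  have haG₀ : a ∈ G₀ γ := (hprop 0).2.2.2.2.2.1 γ (hAll 0)
  obtain ⟨z, ⟨i, hzi⟩, hzγ⟩ := hG₀sub γ haG₀
  exact (hprop i).2.2.2.2.2.2 γ a (hAll i) (hzγ ▸ hzi γ)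
end

section
/- There exists a soft e-topological space (X̃, τ, A) in which the only soft e-closed sets are the null and absolute soft sets (so every family of soft e-closed sets with null elementary intersection trivially has a finite subfamily with null elementary intersection), yet (X̃, τ, A) is not soft e-quasi-compact. Concretely: X = (1, ∞), A = [1, ∞), τ = {null soft set} ∪ {O_i | i ∈ [1,∞)} where O_i(α) = ((1 + iα)/(i + α), ∞); then τ is a soft e-topology, every O_i with i > 1 has relative complement not in S(X̃) (since O_i(1) = X), and the cover {O_i}_{i>1} of the absolute soft set admits no finite subcover. -/
open SoftE

noncomputable section Aux17


noncomputable section Aux17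

/-- The endpoint function. -/
def fr (i α : ℝ) : ℝ := (1 + i * α) / (i + α)

lemma fr_denom_pos {i α : ℝ} (hi : 1 ≤ i) (hα : 1 ≤ α) : 0 < i + α := by linarith

lemma one_le_fr {i α : ℝ} (hi : 1 ≤ i) (hα : 1 ≤ α) : 1 ≤ fr i α := by
  rw [fr, le_div_iff₀ (fr_denom_pos hi hα)]
  nlinarith

lemma fr_sub_fr {i j α : ℝ} (hi : 1 ≤ i) (hj : 1 ≤ j) (hα : 1 ≤ α) :
    fr i α - fr j α = (i - j) * (α ^ 2 - 1) / ((i + α) * (j + α)) := by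
  have h1 : i + α ≠ 0 := ne_of_gt (fr_denom_pos hi hα)
  have h2 : j + α ≠ 0 := ne_of_gt (fr_denom_pos hj hα)
  rw [fr, fr]
  field_simp
  ring

lemma fr_mono {i j α : ℝ} (hi : 1 ≤ i) (hj : 1 ≤ j) (hα : 1 ≤ α) (hji : j ≤ i) :
    fr j α ≤ fr i α := by
  have h := fr_sub_fr hi hj hα
  have : 0 ≤ (i - j) * (α ^ 2 - 1) / ((i + α) * (j + α)) := by
    apply div_nonneg
    · exact mul_nonneg (by linarith) (by nlinarith)
    · nlinarith [fr_denom_pos hi hα, fr_denom_pos hj hα]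
  linarith

lemma fr_one_left {α : ℝ} (hα : 1 ≤ α) : fr 1 α = 1 := by
  rw [fr, one_mul, div_self]
  linarith

lemma fr_one_right {i : ℝ} (hi : 1 ≤ i) : fr i 1 = 1 := by
  rw [fr, mul_one, add_comm 1 i, div_self]
  linarith

lemma one_lt_fr_two {i : ℝ} (hi : 1 < i) : 1 < fr i 2 := by
  rw [fr, lt_div_iff₀ (by linarith : (0:ℝ) < i + 2)]
  nlinarith

/-- Key infimum lemma. -/
lemma exists_fr_lt (I : Set ℝ) (hne : I.Nonempty) (hI : ∀ r ∈ I, 1 ≤ r)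
    {α a : ℝ} (hα : 1 ≤ α) (h : fr (sInf I) α < a) : ∃ i ∈ I, fr i α < a := by
  have hbdd : BddBelow I := ⟨1, hI⟩
  set j := sInf I with hjdef
  have hj1 : 1 ≤ j := le_csInf hne hI
  rcases eq_or_lt_of_le hα with heq | hα1
  · obtain ⟨i, hi⟩ := hne
    refine ⟨i, hi, ?_⟩
    rw [← heq] at h ⊢
    rw [fr_one_right (hI i hi)]
    rw [fr_one_right hj1] at h
    exact h
  · have hd : 0 < a - fr j α := by linarith
    have hα2 : 0 < α ^ 2 - 1 := by nlinarith
    have hjα : 0 < j + α := fr_denom_pos hj1 hα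
    set ε := (a - fr j α) * (j + α) ^ 2 / (α ^ 2 - 1) with hεdef
    have hε : 0 < ε := by positivity
    obtain ⟨i, hiI, hij⟩ := exists_lt_of_csInf_lt hne (show sInf I < j + ε by linarith)
    have hi1 : 1 ≤ i := hI i hiI
    have hji : j ≤ i := csInf_le hbdd hiI
    refine ⟨i, hiI, ?_⟩
    have hsub := fr_sub_fr hi1 hj1 hα
    have hiα : 0 < i + α := fr_denom_pos hi1 hα
    have hkey : (i - j) * (α ^ 2 - 1) < (a - fr j α) * ((i + α) * (j + α)) := by
      have h1 : (i - j) * (α ^ 2 - 1) < ε * (α ^ 2 - 1) := by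
        have : i - j < ε := by linarith
        nlinarith
      have h2 : ε * (α ^ 2 - 1) = (a - fr j α) * (j + α) ^ 2 := by
        rw [hεdef]; field_simp
      nlinarith [mul_nonneg (mul_nonneg hd.le hjα.le) (sub_nonneg.2 hji)]
    have : (i - j) * (α ^ 2 - 1) / ((i + α) * (j + α)) < a - fr j α := by
      rw [div_lt_iff₀ (by positivity)]
      linarith [hkey]
    linarith


abbrev XX : Type := {x : ℝ // 1 < x}
abbrev AA : Type := {a : ℝ // 1 ≤ a}

def OO : AA → SoftSet XX AA := fun i α => {x : XX | (1 + i.1 * α.1) / (i.1 + α.1) < x.1}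

lemma mem_OO {i α : AA} {x : XX} : x ∈ OO i α ↔ fr i.1 α.1 < x.1 := Iff.rfl

def tau : Set (SoftSet XX AA) := insert (nullSoft XX AA) (Set.range OO)

lemma exists_smem_OO (i α : AA) (a : XX) (ha : a ∈ OO i α) :
    ∃ x : AA → XX, smem x (OO i) ∧ x α = a := by
  classical
  have hX : ∀ β : AA, 1 < fr i.1 β.1 + 1 := fun β => by
    have := one_le_fr i.2 β.2; linarith
  refine ⟨fun β => if h : β = α then a else ⟨fr i.1 β.1 + 1, hX β⟩, fun β => ?_, by simp⟩
  dsimp only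
  split
  · rename_i h; subst h; exact ha
  · exact (mem_OO).2 (by simp)

lemma SS_smem_OO (i : AA) : SS {x : AA → XX | smem x (OO i)} = OO i := by
  funext α; ext a
  constructor
  · rintro ⟨x, hx, rfl⟩; exact hx α
  · intro ha
    obtain ⟨x, hx, hxa⟩ := exists_smem_OO i α a ha
    exact ⟨x, hx, hxa⟩

lemma eUnionSet_slice {s : Set (SoftSet XX AA)} (hs : s ⊆ tau) (α : AA) :
    eUnionSet s α = {a : XX | ∃ i : AA, OO i ∈ s ∧ fr i.1 α.1 < a.1} := by
  ext a
  constructor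
  · rintro ⟨x, ⟨F, hFs, hx⟩, rfl⟩
    rcases hs hFs with rfl | ⟨i, rfl⟩
    · exact absurd (hx α) (Set.notMem_empty _)
    · exact ⟨i, hFs, hx α⟩
  · rintro ⟨i, his, ha⟩
    obtain ⟨x, hx, hxa⟩ := exists_smem_OO i α a ha
    exact ⟨x, ⟨OO i, his, hx⟩, hxa⟩

lemma OO_one : OO ⟨1, le_refl 1⟩ = absSoft XX AA := by
  funext α; ext x
  simp only [absSoft, Set.mem_univ, iff_true, mem_OO]
  rw [fr_one_left α.2]
  exact x.2

lemma ray_le {c c' : ℝ} (hc : 1 ≤ c) (h : {x : XX | c < x.1} ⊆ {x : XX | c' < x.1}) :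
    c' ≤ c := by
  by_contra hlt
  push_neg at hlt
  have hm : ((⟨(c + c') / 2, by linarith⟩ : XX) : ℝ) = (c + c') / 2 := rfl
  have := h (show c < ((⟨(c + c') / 2, by linarith⟩ : XX) : ℝ) by rw [hm]; linarith)
  rw [Set.mem_setOf_eq, hm] at this
  linarith

lemma OO_eq_fr {i k : AA} (h : OO i = OO k) : fr i.1 2 = fr k.1 2 := by
  have h2 : (1:ℝ) ≤ 2 := one_le_two
  have hsl := congrFun h (⟨2, h2⟩ : AA)
  have h1 : {x : XX | fr i.1 2 < x.1} = {x : XX | fr k.1 2 < x.1} := hsl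
  have hi := one_le_fr i.2 h2
  have hk := one_le_fr k.2 h2
  exact le_antisymm (ray_le hk (h1 ▸ Set.Subset.refl _)) (ray_le hi (h1 ▸ Set.Subset.refl _))

lemma main17 : IsETopology tau ∧
    (∀ F : SoftSet XX AA, IsEClosed tau F → F = nullSoft XX AA ∨ F = absSoft XX AA) ∧
    ¬ IsEQuasiCompact tau := by
  have habs : absSoft XX AA ∈ tau := Or.inr ⟨⟨1, le_refl 1⟩, OO_one⟩
  refine ⟨⟨?_, Or.inl rfl, habs, ?_, ?_⟩, ?_, ?_⟩
  · -- InS and subset of absSoft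
    rintro F hF
    refine ⟨?_, fun α => Set.subset_univ _⟩
    rcases hF with rfl | ⟨i, rfl⟩
    · exact Or.inl (fun _ => rfl)
    · refine Or.inr (fun α => Set.Nonempty.ne_empty ?_)
      refine ⟨⟨fr i.1 α.1 + 1, by have := one_le_fr i.2 α.2; linarith⟩, ?_⟩
      exact (mem_OO).2 (by simp)
  · -- unions
    intro s hs
    by_cases hI : ∃ i : AA, OO i ∈ s
    · obtain ⟨i₀, hi₀⟩ := hI
      set I : Set ℝ := {r : ℝ | ∃ h : 1 ≤ r, OO ⟨r, h⟩ ∈ s} with hIdef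
      have hIsub : ∀ r ∈ I, 1 ≤ r := fun r hr => hr.choose
      have hIne : I.Nonempty := ⟨i₀.1, i₀.2, hi₀⟩
      have hj1 : 1 ≤ sInf I := le_csInf hIne hIsub
      refine Or.inr ⟨⟨sInf I, hj1⟩, ?_⟩
      funext α
      rw [eUnionSet_slice hs α]
      ext a
      simp only [Set.mem_setOf_eq, mem_OO]
      constructor
      · intro hfr
        obtain ⟨r, hrI, hra⟩ := exists_fr_lt I hIne hIsub α.2 hfr
        obtain ⟨hr1, hrs⟩ := hrI
        exact ⟨⟨r, hr1⟩, hrs, hra⟩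
      · rintro ⟨i, his, ha⟩
        have hiI : i.1 ∈ I := ⟨i.2, his⟩
        have : sInf I ≤ i.1 := csInf_le ⟨1, hIsub⟩ hiI
        exact lt_of_le_of_lt (fr_mono i.2 hj1 α.2 this) ha
    · -- all members are the null soft set
      left
      funext α
      ext a
      simp only [nullSoft, Set.mem_empty_iff_false, iff_false]
      rintro ⟨x, ⟨F, hFs, hx⟩, rfl⟩
      rcases hs hFs with rfl | ⟨i, rfl⟩
      · exact Set.notMem_empty _ (hx α)
      · exact hI ⟨i, hFs⟩
  · -- binary intersections
    rintro F hF G hG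
    rcases hF with rfl | ⟨i, rfl⟩
    · left
      funext α; ext a
      simp only [nullSoft, Set.mem_empty_iff_false, iff_false]
      rintro ⟨x, ⟨hx, -⟩, rfl⟩
      exact Set.notMem_empty _ (hx α)
    rcases hG with rfl | ⟨k, rfl⟩
    · left
      funext α; ext a
      simp only [nullSoft, Set.mem_empty_iff_false, iff_false]
      rintro ⟨x, ⟨-, hx⟩, rfl⟩
      exact Set.notMem_empty _ (hx α)
    · set m : AA := ⟨max i.1 k.1, le_trans i.2 (le_max_left _ _)⟩ with hm
      refine Or.inr ⟨m, ?_⟩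
      have hmax : (m : ℝ) = max i.1 k.1 := rfl
      have hset : {x : AA → XX | smem x (OO i) ∧ smem x (OO k)}
          = {x : AA → XX | smem x (OO m)} := by
        ext x
        simp only [Set.mem_setOf_eq, smem, mem_OO, hmax]
        constructor
        · rintro ⟨h1, h2⟩ α
          rcases le_total i.1 k.1 with hik | hik
          · rw [max_eq_right hik]; exact h2 α
          · rw [max_eq_left hik]; exact h1 α
        · intro h
          refine ⟨fun α => lt_of_le_of_lt (fr_mono m.2 i.2 α.2 (le_max_left _ _)) (h α),
                  fun α => lt_of_le_of_lt (fr_mono m.2 k.2 α.2 (le_max_right _ _)) (h α)⟩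
      rw [eInter2, hset]
      exact (SS_smem_OO m).symm
  · -- only closed sets are null and absolute
    rintro F ⟨hInS, hInSc, hτ⟩
    rcases hInS with h0 | hne
    · exact Or.inl (funext h0)
    rcases hInSc with hc0 | hcne
    · refine Or.inr (funext fun α => ?_)
      have := hc0 α
      rwa [relCompl, Set.compl_empty_iff] at this
    · exfalso
      set α₁ : AA := ⟨1, le_refl 1⟩
      rcases hτ with h | ⟨i, hi⟩
      · have hx : ∀ α : AA, ∃ b : XX, b ∉ F α := fun α => by
          have h1 := hcne α
          rcases Set.nonempty_iff_ne_empty.2 h1 with ⟨b, hb⟩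
          exact ⟨b, hb⟩
        choose x hxF using hx
        have hmem : x α₁ ∈ eCompl F α₁ := ⟨x, hxF, rfl⟩
        rw [h] at hmem
        exact Set.notMem_empty _ hmem
      · obtain ⟨a, haF⟩ := Set.nonempty_iff_ne_empty.2 (hne α₁)
        have ha : a ∈ OO i α₁ := by
          rw [mem_OO, show (α₁ : ℝ) = 1 from rfl, fr_one_right i.2]
          exact a.2
        rw [hi] at ha
        obtain ⟨x, hx, hxa⟩ := ha
        exact hx α₁ (hxa ▸ haF)
  · -- not quasi-compact
    intro hqc
    set s : Set (SoftSet XX AA) := OO '' {i : AA | 1 < i.1} with hsdef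
    have hsτ : s ⊆ tau := by
      rintro F ⟨i, -, rfl⟩
      exact Or.inr ⟨i, rfl⟩
    have hcover : eUnionSet s = absSoft XX AA := by
      funext α
      rw [eUnionSet_slice hsτ α]
      ext a
      simp only [Set.mem_setOf_eq, absSoft, Set.mem_univ, iff_true]
      have h1 : fr (sInf (Set.Ioi 1)) α.1 < a.1 := by
        rw [csInf_Ioi, fr_one_left α.2]; exact a.2
      obtain ⟨r, hr, hra⟩ := exists_fr_lt (Set.Ioi 1) ⟨2, by norm_num⟩
        (fun r hr => le_of_lt hr) α.2 h1
      exact ⟨⟨r, le_of_lt hr⟩, ⟨⟨r, le_of_lt hr⟩, hr, rfl⟩, hra⟩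
    obtain ⟨t, hts, htfin, htcover⟩ := hqc s hsτ hcover
    have hc : ∀ u : Set (SoftSet XX AA), u.Finite → u ⊆ s →
        ∃ c : ℝ, 1 < c ∧ ∀ i : AA, OO i ∈ u → c ≤ fr i.1 2 := by
      intro u hu hu_sub
      refine Set.Finite.induction_on_subset (motive := fun u _ => ∃ c : ℝ, 1 < c ∧ ∀ i : AA, OO i ∈ u → c ≤ fr i.1 2) u hu
        ⟨2, one_lt_two, fun i h => absurd h (Set.notMem_empty _)⟩ ?_
      intro F u' hFu hu'sub hFu' ih
      obtain ⟨c', hc'1, hc'⟩ := ih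
      obtain ⟨i₀, hi₀1, hFi₀⟩ := hu_sub hFu
      have hfi₀ : 1 < fr i₀.1 2 := one_lt_fr_two hi₀1
      refine ⟨min c' (fr i₀.1 2), lt_min hc'1 hfi₀, ?_⟩
      intro i hi
      rcases Set.mem_insert_iff.mp hi with hi | hi
      · have : fr i.1 2 = fr i₀.1 2 := OO_eq_fr (hi.trans hFi₀.symm)
        rw [this]; exact min_le_right _ _
      · exact le_trans (min_le_left _ _) (hc' i hi)
    obtain ⟨c, hc1, hcle⟩ := hc t htfin hts
    set α₂ : AA := ⟨2, one_le_two⟩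
    have hslice := eUnionSet_slice (fun G hG => hsτ (hts hG)) α₂
    have huniv := congrFun htcover α₂
    set a : XX := ⟨(1 + c) / 2, by linarith⟩
    have ha : a ∈ eUnionSet t α₂ := by rw [huniv]; exact Set.mem_univ _
    rw [hslice] at ha
    obtain ⟨i, hit, hia⟩ := ha
    have := hcle i hit
    have haval : (a : ℝ) = (1 + c) / 2 := rfl
    rw [show ((α₂ : AA) : ℝ) = 2 from rfl] at hia
    rw [haval] at hia
    linarith


end Aux17


/-- a soft e-topological space whose only soft e-closed sets are
the null and absolute soft sets, yet which is not soft e-quasi-compact. -/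
theorem stmt17 :
    letI X : Type := {x : ℝ // 1 < x}
    letI A : Type := {a : ℝ // 1 ≤ a}
    letI O : A → SoftSet X A :=
      fun i α => {x : X | (1 + i.1 * α.1) / (i.1 + α.1) < x.1}
    letI τ : Set (SoftSet X A) := insert (nullSoft X A) (Set.range O)
    IsETopology τ ∧
      (∀ F : SoftSet X A, IsEClosed τ F →
        F = nullSoft X A ∨ F = absSoft X A) ∧
      ¬ IsEQuasiCompact τ := main17
end Aux17
end
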